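/- arXiv:1806.10489 — 3 statements merged into one kernel-verified Lean document; each statement's English description precedes it below -/
import Mathlib

section
/- Let g be a nilpotent real Lie algebra of dimension 2n+1 admitting a contact form, i.e. an element Θ ∈ g* with Θ ∧ (δΘ)^n ≠ 0. Then the center Z(g) of g has dimension exactly one. -/
noncomputable section

/-- The wedge product of two scalar-valued alternating forms. -/
def wedge {R M : Type*} [CommRing R] [AddCommGroup M] [Module R M] {m n : ℕ}
    (α : M [⋀^Fin m]→ₗ[R] R) (β : M [⋀^Fin n]→ₗ[R] R) : M [⋀^Fin (m + n)]→ₗ[R] R :=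
  (LinearMap.mul' R R).compAlternatingMap ((α.domCoprod β).domDomCongr finSumFinEquiv)

/-- Reindexing of an alternating form along an equality of degrees. -/
def castForm {R M : Type*} [CommRing R] [AddCommGroup M] [Module R M] {m n : ℕ}
    (h : m = n) (α : M [⋀^Fin m]→ₗ[R] R) : M [⋀^Fin n]→ₗ[R] R :=
  α.domDomCongr (finCongr h)

/-- A linear functional, viewed as a `1`-form. -/
def oneForm {R M : Type*} [CommRing R] [AddCommGroup M] [Module R M]
    (f : M →ₗ[R] R) : M [⋀^Fin 1]→ₗ[R] R :=
  AlternatingMap.ofSubsingleton R M R 0 f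


/-- The `k`-th wedge power of a `2`-form. -/
def wpow {R M : Type*} [CommRing R] [AddCommGroup M] [Module R M]
    (β : M [⋀^Fin 2]→ₗ[R] R) : (k : ℕ) → M [⋀^Fin (2 * k)]→ₗ[R] R
  | 0 => castForm (by ring) (AlternatingMap.constOfIsEmpty R M (Fin 0) 1)
  | (k + 1) => castForm (by ring) (wedge β (wpow β k))

/-- If each of `α`, `β` vanishes whenever one of its arguments is `z`, then so does
their wedge product. -/
lemma wedge_apply_eq_zero {R M : Type*} [CommRing R] [AddCommGroup M] [Module R M] {m n : ℕ}
    (α : M [⋀^Fin m]→ₗ[R] R) (β : M [⋀^Fin n]→ₗ[R] R) (z : M)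
    (hα : ∀ v : Fin m → M, (∃ i, v i = z) → α v = 0)
    (hβ : ∀ v : Fin n → M, (∃ i, v i = z) → β v = 0)
    (v : Fin (m + n) → M) (hv : ∃ i, v i = z) : wedge α β v = 0 := by
  obtain ⟨j, hj⟩ := hv
  have h1 : wedge α β v = LinearMap.mul' R R ((α.domCoprod β) (v ∘ finSumFinEquiv)) := rfl
  set w : Fin m ⊕ Fin n → M := v ∘ finSumFinEquiv with hw
  have hwz : w (finSumFinEquiv.symm j) = z := by
    simp [hw, hj]
  have h2 : (α.domCoprod β) w = 0 := by
    change (↑(α.domCoprod β) : MultilinearMap R (fun _ : Fin m ⊕ Fin n => M)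
      (TensorProduct R R R)) w = 0
    rw [AlternatingMap.domCoprod_coe, MultilinearMap.sum_apply]
    apply Finset.sum_eq_zero
    intro σ _
    induction σ using Quotient.inductionOn' with
    | h σ =>
      rw [AlternatingMap.domCoprod.summand_mk'']
      simp only [MultilinearMap.smul_apply, MultilinearMap.domDomCongr_apply,
        MultilinearMap.domCoprod_apply, AlternatingMap.coe_multilinearMap]
      rcases hσ : σ.symm (finSumFinEquiv.symm j) with i | i
      · have : (fun i' => w (σ (Sum.inl i'))) i = z := by
          have : σ (Sum.inl i) = finSumFinEquiv.symm j := by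
            rw [← hσ]; simp
          simp [this, hwz]
        rw [hα _ ⟨i, this⟩, TensorProduct.zero_tmul, smul_zero]
      · have : (fun i' => w (σ (Sum.inr i'))) i = z := by
          have : σ (Sum.inr i) = finSumFinEquiv.symm j := by
            rw [← hσ]; simp
          simp [this, hwz]
        rw [hβ _ ⟨i, this⟩, TensorProduct.tmul_zero, smul_zero]
  rw [h1, h2, map_zero]

lemma wpow_apply_eq_zero {R M : Type*} [CommRing R] [AddCommGroup M] [Module R M]
    (β : M [⋀^Fin 2]→ₗ[R] R) (z : M)
    (hβ : ∀ v : Fin 2 → M, (∃ i, v i = z) → β v = 0) :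
    ∀ (k : ℕ) (v : Fin (2 * k) → M), (∃ i, v i = z) → wpow β k v = 0 := by
  intro k
  induction k with
  | zero => intro v ⟨i, _⟩; exact absurd i.2 (by omega)
  | succ k ih =>
    intro v ⟨i, hi⟩
    show (wedge β (wpow β k)) (v ∘ finCongr (by ring : 2 + 2 * k = 2 * (k + 1))) = 0
    apply wedge_apply_eq_zero β (wpow β k) z hβ ih
    refine ⟨(finCongr (by ring : 2 + 2 * k = 2 * (k + 1))).symm i, ?_⟩
    simp [hi]

/-- Let `g` be a nilpotent real Lie algebra of dimension `2n+1` admitting a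
contact form, i.e. an element `Θ ∈ g*` with `Θ ∧ (δΘ)^n ≠ 0`, where `δ` is the
Chevalley–Eilenberg differential, determined on `1`-forms by `(δα)(x,y) = −α([x,y])`.
Then the center of `g` has dimension exactly one. -/
theorem center_dim_one_of_contact (n : ℕ) (g : Type*) [LieRing g] [LieAlgebra ℝ g]
    [Module.Finite ℝ g] [LieRing.IsNilpotent g]
    (hdim : Module.finrank ℝ g = 2 * n + 1)
    (δ : Module.Dual ℝ g → (g [⋀^Fin 2]→ₗ[ℝ] ℝ))
    (hδ : ∀ (α : Module.Dual ℝ g) (x y : g), δ α ![x, y] = -α ⁅x, y⁆)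
    (Θ : Module.Dual ℝ g)
    (hΘ : wedge (oneForm Θ) (wpow (δ Θ) n) ≠ 0) :
    Module.finrank ℝ ↥(LieAlgebra.center ℝ g) = 1 := by
  set ω := wedge (oneForm Θ) (wpow (δ Θ) n) with hωdef
  -- the key injectivity statement
  have key : ∀ z : g, z ∈ LieAlgebra.center ℝ g → Θ z = 0 → z = 0 := by
    intro z hz hΘz
    have hzlie : ∀ x : g, ⁅z, x⁆ = 0 := by
      intro x
      have := (LieModule.mem_maxTrivSubmodule ℝ g g z).mp hz x
      rw [← lie_skew, this, neg_zero]
    -- the one-form vanishes on z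
    have h1 : ∀ v : Fin 1 → g, (∃ i, v i = z) → oneForm Θ v = 0 := by
      intro v ⟨i, hi⟩
      have : v 0 = z := by rwa [Subsingleton.elim (0 : Fin 1) i]
      show Θ (v 0) = 0
      rw [this, hΘz]
    -- the two-form vanishes on z
    have h2 : ∀ v : Fin 2 → g, (∃ i, v i = z) → δ Θ v = 0 := by
      intro v ⟨i, hi⟩
      have hv : v = ![v 0, v 1] := by
        funext i; fin_cases i <;> simp
      rw [hv, hδ]
      fin_cases i
      · have hi' : v 0 = z := hi
        rw [hi', hzlie, map_zero, neg_zero]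
      · have hi' : v 1 = z := hi
        rw [hi', ← lie_skew, hzlie, neg_zero, map_zero, neg_zero]
    have hω : ∀ v : Fin (1 + 2 * n) → g, (∃ i, v i = z) → ω v = 0 :=
      wedge_apply_eq_zero _ _ z h1 (wpow_apply_eq_zero (δ Θ) z h2 n)
    -- pick vectors where ω is nonzero
    obtain ⟨v, hv⟩ : ∃ v : Fin (1 + 2 * n) → g, ω v ≠ 0 := by
      by_contra h
      push_neg at h
      exact hΘ (AlternatingMap.ext h)
    have hli : LinearIndependent ℝ v := by
      by_contra h
      exact hv (AlternatingMap.map_linearDependent ω v h)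
    have hcard : Fintype.card (Fin (1 + 2 * n)) = Module.finrank ℝ g := by
      simp [hdim]; omega
    let b := basisOfLinearIndependentOfCardEqFinrank hli hcard
    have hb : ⇑b = v := coe_basisOfLinearIndependentOfCardEqFinrank hli hcard
    -- show all coordinates of z vanish
    have hrepr : ∀ j, b.repr z j = 0 := by
      intro j
      have hz0 : ω (Function.update v j z) = 0 := hω _ ⟨j, Function.update_self j z v⟩
      have hsum : z = ∑ i, b.repr z i • v i := by
        conv_lhs => rw [← b.sum_repr z]
        simp [hb]
      rw [hsum] at hz0
      rw [ω.map_update_sum] at hz0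
      have : ∀ i ∈ Finset.univ, i ≠ j →
          ω (Function.update v j (b.repr z i • v i)) = 0 := by
        intro i _ hij
        rw [AlternatingMap.map_update_smul]
        rw [ω.map_eq_zero_of_eq (Function.update v j (v i)) (i := i) (j := j)]
        · rw [smul_zero]
        · rw [Function.update_of_ne hij, Function.update_self]
        · exact hij
      rw [Finset.sum_eq_single_of_mem j (Finset.mem_univ j) (fun i hi hij => this i hi hij)]
        at hz0
      rw [AlternatingMap.map_update_smul, Function.update_eq_self] at hz0
      rcases smul_eq_zero.mp hz0 with h | h
      · exact h
      · exact absurd h hv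
    have : b.repr z = 0 := by ext j; simp [hrepr j]
    have := congrArg (b.repr.symm) this
    simpa using this
  -- upper bound: Θ restricted to the center is injective
  have hinj : Function.Injective (Θ.comp ((LieAlgebra.center ℝ g).toSubmodule).subtype) := by
    rw [← LinearMap.ker_eq_bot]
    ext x
    simp only [LinearMap.mem_ker, Submodule.mem_bot, LinearMap.comp_apply,
      Submodule.subtype_apply]
    constructor
    · intro hx
      have := key x.1 x.2 hx
      exact Subtype.ext this
    · intro hx; rw [hx]; simp
  have hle : Module.finrank ℝ ↥(LieAlgebra.center ℝ g) ≤ 1 := by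
    have := LinearMap.finrank_le_finrank_of_injective hinj
    simp at this; exact this
  -- lower bound: nilpotent nontrivial Lie algebra has nontrivial center
  have : Nontrivial g := Module.nontrivial_of_finrank_pos (R := ℝ) (by omega)
  have hnt : Nontrivial ↥(LieAlgebra.center ℝ g) :=
    LieAlgebra.non_trivial_center_of_isNilpotent
  have hpos : 0 < Module.finrank ℝ ↥(LieAlgebra.center ℝ g) := Module.finrank_pos
  omega

end
end

section
/- For the five-dimensional nilpotent real Lie algebra L_{5,7} with nonzero brackets [e1,e2]=e3, [e1,e3]=e4, [e1,e4]=e5, every α ∈ g* satisfies α ∧ δα ∧ δα = 0 in Λ^5 g*; consequently L_{5,7} admits no contact form. -/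
set_option linter.unnecessarySeqFocus false

noncomputable section

/-- A linear functional, viewed as a `1`-form. -/

lemma wedge_apply' {R M : Type*} [CommRing R] [AddCommGroup M] [Module R M] {m n : ℕ}
    (α : M [⋀^Fin m]→ₗ[R] R) (β : M [⋀^Fin n]→ₗ[R] R) (v : Fin (m+n) → M) :
    wedge α β v = ∑ σ : Equiv.Perm.ModSumCongr (Fin m) (Fin n),
      LinearMap.mul' R R (AlternatingMap.domCoprod.summand α β σ (v ∘ finSumFinEquiv)) := by
  simp [wedge, AlternatingMap.domCoprod_apply, MultilinearMap.sum_apply]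

lemma summand_zero' {R M : Type*} [CommRing R] [AddCommGroup M] [Module R M] {m n : ℕ}
    (α : M [⋀^Fin m]→ₗ[R] R) (β : M [⋀^Fin n]→ₗ[R] R) (w : Fin m ⊕ Fin n → M)
    (σ : Equiv.Perm.ModSumCongr (Fin m) (Fin n))
    (h : ∀ σ' : Equiv.Perm (Fin m ⊕ Fin n),
      α (fun i => w (σ' (Sum.inl i))) = 0 ∨ β (fun i => w (σ' (Sum.inr i))) = 0) :
    LinearMap.mul' R R (AlternatingMap.domCoprod.summand α β σ w) = 0 := by
  induction σ using Quotient.inductionOn' with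
  | h σ' =>
    rw [AlternatingMap.domCoprod.summand_mk'']
    rcases h σ' with h0 | h0 <;>
      simp [MultilinearMap.domDomCongr_apply, MultilinearMap.domCoprod_apply, h0]

lemma wedge_zero_right' {R M : Type*} [CommRing R] [AddCommGroup M] [Module R M] {m n : ℕ}
    (α : M [⋀^Fin m]→ₗ[R] R) : wedge α (0 : M [⋀^Fin n]→ₗ[R] R) = 0 := by
  unfold wedge
  rw [← AlternatingMap.domCoprod'_apply, TensorProduct.tmul_zero, map_zero]
  ext v
  simp

/-- The underlying vector space of the 5-dimensional nilpotent Lie algebra `L57`. -/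
def L57 : Type := Fin 5 → ℝ

instance : AddCommGroup L57 := inferInstanceAs (AddCommGroup (Fin 5 → ℝ))
instance : Module ℝ L57 := inferInstanceAs (Module ℝ (Fin 5 → ℝ))

theorem L57.add_apply (x y : L57) (i : Fin 5) : (x + y) i = x i + y i := rfl
theorem L57.smul_apply (t : ℝ) (x : L57) (i : Fin 5) : (t • x) i = t * x i := rfl

/-- The bracket of `L57`: `[e1,e2] = e3`, `[e1,e3] = e4`, `[e1,e4] = e5`. -/
def L57.b (x y : Fin 5 → ℝ) : Fin 5 → ℝ := ![0, 0, x 0 * y 1 - x 1 * y 0, x 0 * y 2 - x 2 * y 0, x 0 * y 3 - x 3 * y 0]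

instance : LieRing L57 where
  bracket x y := L57.b x y
  add_lie x y z := by
    show L57.b (x + y) z = L57.b x z + L57.b y z
    funext i; fin_cases i <;> simp [L57.b, L57.add_apply] <;> ring
  lie_add x y z := by
    show L57.b x (y + z) = L57.b x y + L57.b x z
    funext i; fin_cases i <;> simp [L57.b, L57.add_apply] <;> ring
  lie_self x := by
    show L57.b x x = 0
    funext i; fin_cases i <;> simp [L57.b] <;> ring
  leibniz_lie x y z := by
    show L57.b x (L57.b y z) = L57.b (L57.b x y) z + L57.b y (L57.b x z)
    funext i; fin_cases i <;> simp [L57.b, L57.add_apply] <;> ring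

instance : LieAlgebra ℝ L57 where
  lie_smul t x y := by
    show L57.b x (t • y) = t • L57.b x y
    funext i; fin_cases i <;> simp [L57.b, L57.smul_apply] <;> ring

/-- The standard basis `e1, …, e5` of `L57` (indexed by `0, …, 4`). -/
def L57.e (i : Fin 5) : L57 := (Pi.single i 1 : Fin 5 → ℝ)

/-- The dual basis `e^1, …, e^5` of `L57` (indexed by `0, …, 4`). -/
def L57.eps (i : Fin 5) : Module.Dual ℝ L57 where
  toFun x := x i
  map_add' _ _ := rfl
  map_smul' _ _ := rfl



lemma L57.bracket_zero (x y : L57) (hx : x 0 = 0) (hy : y 0 = 0) : ⁅x, y⁆ = 0 := by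
  show L57.b x y = 0
  funext i
  fin_cases i <;> simp [L57.b, hx, hy]

lemma delta_apply (δ : Module.Dual ℝ L57 → (L57 [⋀^Fin 2]→ₗ[ℝ] ℝ))
    (hδ : ∀ (α : Module.Dual ℝ L57) (x y : L57), δ α ![x, y] = -α ⁅x, y⁆)
    (α : Module.Dual ℝ L57) (w : Fin 2 → L57) : δ α w = -α ⁅w 0, w 1⁆ := by
  have hw : w = ![w 0, w 1] := by
    funext i; fin_cases i <;> rfl
  calc δ α w = δ α ![w 0, w 1] := by rw [← hw]
    _ = -α ⁅w 0, w 1⁆ := hδ α (w 0) (w 1)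

lemma wedge_delta_delta (δ : Module.Dual ℝ L57 → (L57 [⋀^Fin 2]→ₗ[ℝ] ℝ))
    (hδ : ∀ (α : Module.Dual ℝ L57) (x y : L57), δ α ![x, y] = -α ⁅x, y⁆)
    (α : Module.Dual ℝ L57) : wedge (δ α) (δ α) = 0 := by
  let B : Module.Basis (Fin 5) ℝ L57 := Pi.basisFun ℝ (Fin 5)
  have hB : ∀ i : Fin 5, i ≠ 0 → (B i : L57) 0 = 0 := by
    intro i hi
    show (Pi.basisFun ℝ (Fin 5) i : Fin 5 → ℝ) 0 = 0
    simp [Pi.basisFun_apply, Pi.single_apply, hi.symm]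
  refine Module.Basis.ext_alternating B ?_
  intro v hv
  rw [AlternatingMap.zero_apply, wedge_apply']
  refine Finset.sum_eq_zero fun σ _ => ?_
  refine summand_zero' _ _ _ _ fun σ' => ?_
  set w : Fin 2 ⊕ Fin 2 → L57 := ((fun i => B (v i)) ∘ finSumFinEquiv) with hw
  set u : Fin 2 ⊕ Fin 2 → Fin 5 := fun s => v (finSumFinEquiv (σ' s)) with hu
  have hui : Function.Injective u := by
    intro a b hab
    exact σ'.injective (finSumFinEquiv.injective (hv hab))
  have hval : ∀ s, w (σ' s) = B (u s) := fun s => rfl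
  have key : (∀ i : Fin 2, u (Sum.inl i) ≠ 0) ∨ (∀ i : Fin 2, u (Sum.inr i) ≠ 0) := by
    by_contra hcon
    push_neg at hcon
    obtain ⟨⟨a, ha⟩, ⟨b, hb⟩⟩ := hcon
    have : Sum.inl a = (Sum.inr b : Fin 2 ⊕ Fin 2) := hui (by rw [ha, hb])
    exact Sum.inl_ne_inr this
  rcases key with hk | hk
  · left
    rw [show (fun i => w (σ' (Sum.inl i))) = fun i => B (u (Sum.inl i)) from rfl]
    rw [delta_apply δ hδ]
    rw [L57.bracket_zero _ _ (hB _ (hk 0)) (hB _ (hk 1))]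
    simp
  · right
    rw [show (fun i => w (σ' (Sum.inr i))) = fun i => B (u (Sum.inr i)) from rfl]
    rw [delta_apply δ hδ]
    rw [L57.bracket_zero _ _ (hB _ (hk 0)) (hB _ (hk 1))]
    simp

/-- For the five-dimensional nilpotent real Lie algebra `L_{5,7}` with
nonzero brackets `[e1,e2]=e3`, `[e1,e3]=e4`, `[e1,e4]=e5`, every `α ∈ g*` satisfies
`α ∧ δα ∧ δα = 0` in `Λ^5 g*`; consequently `L_{5,7}` admits no contact form. Here `δ` is
the Chevalley–Eilenberg differential, determined on `1`-forms by `(δα)(x,y) = −α([x,y])`. -/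
theorem L57_no_contact
    (δ : Module.Dual ℝ L57 → (L57 [⋀^Fin 2]→ₗ[ℝ] ℝ))
    (hδ : ∀ (α : Module.Dual ℝ L57) (x y : L57), δ α ![x, y] = -α ⁅x, y⁆) :
    (∀ α : Module.Dual ℝ L57, wedge (oneForm α) (wedge (δ α) (δ α)) = 0) ∧
    ¬ ∃ Θ : Module.Dual ℝ L57, wedge (oneForm Θ) (wedge (δ Θ) (δ Θ)) ≠ 0 := by
  have hmain : ∀ α : Module.Dual ℝ L57, wedge (oneForm α) (wedge (δ α) (δ α)) = 0 := by
    intro α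
    rw [wedge_delta_delta δ hδ α]
    exact wedge_zero_right' _
  exact ⟨hmain, fun ⟨Θ, hΘ⟩ => hΘ (hmain Θ)⟩

end
end

section
/- Let g be a finite-dimensional real Lie algebra, H ∈ Λ³g_R* a real D-closed 3-form, and L an H-generalized contact structure on g. Then L^{−ι_1 H} := {(X, ψ − ι_X ι_1 H) : (X,ψ) ∈ L} is a generalized contact structure on g (i.e. an H'-generalized contact structure with H' = 0). In particular, every H-generalized contact structure on g is a 2-form transform of an untwisted generalized contact structure. -/
set_option linter.unnecessarySeqFocus false

open scoped TensorProduct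

noncomputable section

/-- The argument tuple `([x_i,x_j], x_0, …, x̂_i, …, x̂_j, …, x_m)` appearing in the Koszul
formula for the Chevalley–Eilenberg differential (only relevant when `i < j`). -/
def kosArg {W : Type*} [LieRing W] {m : ℕ} (v : Fin (m + 1) → W) (i j : Fin (m + 1)) :
    Fin m → W := fun k =>
  if hk : (k : ℕ) = 0 then ⁅v i, v j⁆
  else
    v ⟨if (k : ℕ) - 1 < (i : ℕ) then (k : ℕ) - 1
       else if (k : ℕ) < (j : ℕ) then (k : ℕ) else (k : ℕ) + 1,
      by have := k.isLt; have := i.isLt; have := j.isLt; split_ifs <;> omega⟩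

/-- `d` is (the degree `m` part of) the Chevalley–Eilenberg differential of `W` with trivial
coefficients, characterized by the Koszul formula
`(δα)(x_0,…,x_m) = Σ_{i<j} (−1)^{i+j} α([x_i,x_j],x_0,…,x̂_i,…,x̂_j,…,x_m)`. -/
def IsCEDiff {R W : Type*} [CommRing R] [LieRing W] [LieAlgebra R W]
    {m : ℕ} (d : (W [⋀^Fin m]→ₗ[R] R) → (W [⋀^Fin (m + 1)]→ₗ[R] R)) : Prop :=
  ∀ (α : W [⋀^Fin m]→ₗ[R] R) (v : Fin (m + 1) → W),
    d α v = ∑ p ∈ Finset.univ.filter (fun p : Fin (m + 1) × Fin (m + 1) => p.1 < p.2),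
      ((-1 : R) ^ ((p.1 : ℕ) + (p.2 : ℕ))) • α (kosArg v p.1 p.2)


section Complexification

variable (V : Type*) [AddCommGroup V] [Module ℝ V]

/-- Complex conjugation on the complexification `ℂ ⊗[ℝ] V`, as a `conj`-semilinear map. -/
def cxConj : (ℂ ⊗[ℝ] V) →ₛₗ[starRingEnd ℂ] (ℂ ⊗[ℝ] V) where
  toFun := (LinearMap.rTensor V Complex.conjAe.toLinearMap)
  map_add' x y := map_add _ x y
  map_smul' c x := by
    induction x using TensorProduct.induction_on with
    | zero => simp
    | tmul a v => simp [TensorProduct.smul_tmul', smul_eq_mul, map_mul]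
    | add x y hx hy =>
        simp only [smul_add, map_add]
        exact congrArg₂ (· + ·) hx hy

instance : RingHomSurjective (starRingEnd ℂ) :=
  ⟨fun c => ⟨(starRingEnd ℂ) c, by simp⟩⟩

/-- The complexification `S_ℂ ⊆ V_ℂ` of a real subspace `S ⊆ V`. -/
def cxSpan (S : Submodule ℝ V) : Submodule ℂ (ℂ ⊗[ℝ] V) :=
  Submodule.span ℂ ((fun v => (1 : ℂ) ⊗ₜ[ℝ] v) '' (S : Set V))

end Complexification


section TrivialExtension

variable {R : Type*} [CommRing R] {L : Type*} [LieRing L]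

/-- The Lie bracket `[(ξ,r),(η,k)] = ([ξ,η],0)` on the abelian extension `L ⊕ R`. -/
instance instLieRingTrivExt : LieRing (L × R) where
  bracket x y := (⁅x.1, y.1⁆, 0)
  add_lie x y z := by ext <;> simp [add_lie]
  lie_add x y z := by ext <;> simp [lie_add]
  lie_self x := by ext <;> simp
  leibniz_lie x y z := by ext <;> simp

instance instLieAlgebraTrivExt [LieAlgebra R L] : LieAlgebra R (L × R) where
  lie_smul t x y := by
    show ((⁅x.1, (t • y).1⁆ : L), (0 : R)) = t • (⁅x.1, y.1⁆, (0 : R))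
    ext <;> simp

end TrivialExtension


section GeneralizedContact

variable (g : Type*) [LieRing g] [LieAlgebra ℝ g]

/-- The complexification `(g_ℝ)_ℂ = (ℂ ⊗ g) ⊕ ℂ` of `g_ℝ = g ⊕ ℝ`,
a complex Lie algebra with bracket `[(ξ,c),(η,d)] = ([ξ,η],0)`. -/
abbrev gC : Type _ := (ℂ ⊗[ℝ] g) × ℂ

/-- The canonical inclusion `g_ℝ → (g_ℝ)_ℂ`. -/
def incC (p : g × ℝ) : gC g := ((1 : ℂ) ⊗ₜ[ℝ] p.1, (p.2 : ℂ))

/-- `1* ∈ g_ℝ*`: the projection onto the `ℝ`-summand. -/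
def oneStarR : Module.Dual ℝ (g × ℝ) := LinearMap.snd ℝ g ℝ

/-- The `ℂ`-bilinear extension of `1*` to `(g_ℝ)_ℂ`. -/
def oneStarC : Module.Dual ℂ (gC g) := LinearMap.snd ℂ (ℂ ⊗[ℝ] g) ℂ

variable {g}

/-- The operator `D = δ + u ∧ ·` in degree `m` (for `u = 1*`). -/
def Dform {R M : Type*} [CommRing R] [AddCommGroup M] [Module R M] (u : M →ₗ[R] R) {m : ℕ}
    (d : (M [⋀^Fin m]→ₗ[R] R) → (M [⋀^Fin (m + 1)]→ₗ[R] R)) (α : M [⋀^Fin m]→ₗ[R] R) :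
    M [⋀^Fin (m + 1)]→ₗ[R] R :=
  d α + castForm (Nat.add_comm 1 m) (wedge (oneForm u) α)

/-- The operator `D = δ + u ∧ ·` in degree `0` (the Chevalley–Eilenberg differential with
trivial coefficients vanishes on `Λ⁰`, by the Koszul formula). -/
def DformZero {R M : Type*} [CommRing R] [AddCommGroup M] [Module R M] (u : M →ₗ[R] R)
    (c : M [⋀^Fin 0]→ₗ[R] R) : M [⋀^Fin 1]→ₗ[R] R :=
  c ![] • oneForm u

/-- The Lie derivative `L_X = ι_X ∘ D + D ∘ ι_X` of a `1`-form `ψ`, where `D = δ + 1* ∧ ·`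
and `δ` (in degree one) is `d`. -/
def lieDer (d : ((gC g) [⋀^Fin 1]→ₗ[ℂ] ℂ) → ((gC g) [⋀^Fin 2]→ₗ[ℂ] ℂ)) (X : gC g)
    (ψ : (gC g) [⋀^Fin 1]→ₗ[ℂ] ℂ) : (gC g) [⋀^Fin 1]→ₗ[ℂ] ℂ :=
  (Dform (oneStarC g) d ψ).curryLeft X + DformZero (oneStarC g) (ψ.curryLeft X)

/-- The `Θ`-twisted Dorfman bracket
`[[(X₁,ψ₁),(X₂,ψ₂)]]_Θ = ([X₁,X₂], L_{X₁} ψ₂ − ι_{X₂} D ψ₁ + ι_{X₁} ι_{X₂} Θ)`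
on `(g_ℝ)_ℂ ⊕ ((g_ℝ)_ℂ)*` (`ℂ`-bilinear extension of the `H`-twisted Dorfman bracket,
for `Θ` the extension of `H`). -/
def dorfman (d : ((gC g) [⋀^Fin 1]→ₗ[ℂ] ℂ) → ((gC g) [⋀^Fin 2]→ₗ[ℂ] ℂ))
    (Θ : (gC g) [⋀^Fin 3]→ₗ[ℂ] ℂ) (a b : gC g × ((gC g) [⋀^Fin 1]→ₗ[ℂ] ℂ)) :
    gC g × ((gC g) [⋀^Fin 1]→ₗ[ℂ] ℂ) :=
  (⁅a.1, b.1⁆,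
    lieDer d a.1 b.2 - (Dform (oneStarC g) d a.2).curryLeft b.1 +
      (Θ.curryLeft b.1).curryLeft a.1)

/-- The (ℂ-bilinear extension of the) pairing `⟨⟨(X₁,ψ₁),(X₂,ψ₂)⟩⟩ = ψ₁(X₂) + ψ₂(X₁)`. -/
def omniPair (a b : gC g × ((gC g) [⋀^Fin 1]→ₗ[ℂ] ℂ)) : ℂ :=
  a.2 ![b.1] + b.2 ![a.1]

/-- Conjugation on `(g_ℝ)_ℂ`. -/
def conjGC (p : gC g) : gC g := (cxConj g p.1, (starRingEnd ℂ) p.2)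

theorem conjGC_add (x y : gC g) : conjGC (x + y) = conjGC x + conjGC y := by
  unfold conjGC
  ext <;> simp [Prod.fst_add, Prod.snd_add, map_add]

theorem conjGC_smul (c : ℂ) (x : gC g) : conjGC (c • x) = (starRingEnd ℂ) c • conjGC x := by
  unfold conjGC
  ext <;> simp [Prod.smul_fst, Prod.smul_snd, map_smulₛₗ]

/-- Conjugation of a `ℂ`-linear functional on `(g_ℝ)_ℂ`: `(conj f)(x) = conj (f (conj x))`. -/
def conjDual (f : Module.Dual ℂ (gC g)) : Module.Dual ℂ (gC g) where
  toFun x := (starRingEnd ℂ) (f (conjGC x))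
  map_add' x y := by rw [conjGC_add, map_add, map_add]
  map_smul' c x := by rw [conjGC_smul, map_smul, smul_eq_mul, map_mul]; simp

/-- Conjugation on `(g_ℝ)_ℂ ⊕ ((g_ℝ)_ℂ)*`. -/
def conjOmni (a : gC g × ((gC g) [⋀^Fin 1]→ₗ[ℂ] ℂ)) :
    gC g × ((gC g) [⋀^Fin 1]→ₗ[ℂ] ℂ) :=
  (conjGC a.1,
    oneForm (conjDual ((AlternatingMap.ofSubsingleton ℂ (gC g) ℂ 0).symm a.2)))

/-- A (`Θ`-twisted) generalized contact structure on `g`: a complex subspace `L` of the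
complexification of `g_ℝ ⊕ g_ℝ*` which is maximally isotropic for the pairing
(isotropic of complex dimension `dim_ℝ g_ℝ`, i.e. half of `dim_ℝ (g_ℝ ⊕ g_ℝ*)`),
satisfies `L ∩ conj L = {0}`, and is closed under the `Θ`-twisted Dorfman bracket.
Here `d` is the (degree-one) Chevalley–Eilenberg differential of `(g_ℝ)_ℂ`, and `Θ` is
the `ℂ`-bilinear extension of the twisting real `3`-form `H`. -/
def IsGenContact (d : ((gC g) [⋀^Fin 1]→ₗ[ℂ] ℂ) → ((gC g) [⋀^Fin 2]→ₗ[ℂ] ℂ))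
    (Θ : (gC g) [⋀^Fin 3]→ₗ[ℂ] ℂ)
    (L : Submodule ℂ (gC g × ((gC g) [⋀^Fin 1]→ₗ[ℂ] ℂ))) : Prop :=
  (∀ a ∈ L, ∀ b ∈ L, omniPair a b = 0) ∧
  Module.finrank ℂ ↥L = Module.finrank ℝ (g × ℝ) ∧
  (∀ a ∈ L, conjOmni a ∈ L → a = 0) ∧
  (∀ a ∈ L, ∀ b ∈ L, dorfman d Θ a b ∈ L)

/-- The transform `(X, ψ) ↦ (X, ψ + ι_X B)` of the omni-Lie algebra by a `2`-form `B`. -/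
def bTransform (B : (gC g) [⋀^Fin 2]→ₗ[ℂ] ℂ) :
    (gC g × ((gC g) [⋀^Fin 1]→ₗ[ℂ] ℂ)) →ₗ[ℂ] (gC g × ((gC g) [⋀^Fin 1]→ₗ[ℂ] ℂ)) where
  toFun a := (a.1, a.2 + B.curryLeft a.1)
  map_add' a b := by
    ext : 1
    · rfl
    · show (a.2 + b.2) + B.curryLeft (a.1 + b.1) = (a.2 + B.curryLeft a.1) + (b.2 + B.curryLeft b.1)
      rw [map_add]; abel
  map_smul' c a := by
    ext : 1
    · rfl
    · show (c • a.2) + B.curryLeft (c • a.1) = c • (a.2 + B.curryLeft a.1)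
      rw [map_smul, smul_add]

end GeneralizedContact



section Aux
set_option linter.unusedSectionVars false
set_option linter.unreachableTactic false
set_option linter.unusedTactic false

theorem wedge_oneForm_apply {R M : Type*} [Field R] [CharZero R] [AddCommGroup M] [Module R M]
    {m : ℕ} (u : M →ₗ[R] R) (α : M [⋀^Fin m]→ₗ[R] R) (v : Fin (m + 1) → M) :
    castForm (Nat.add_comm 1 m) (wedge (oneForm u) α) v
      = ∑ i : Fin (m + 1), (-1 : R) ^ (i : ℕ) * (u (v i) * α (fun j => v (i.succAbove j))) := by
  classical
  have hfac : ((Nat.factorial m : ℕ) : R) ≠ 0 := by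
    exact_mod_cast Nat.cast_ne_zero.mpr (Nat.factorial_ne_zero m)
  apply mul_left_cancel₀ hfac
  -- the reindexing equivalence
  set e : (Fin 1 ⊕ Fin m) ≃ Fin (m + 1) :=
    finSumFinEquiv.trans (finCongr (Nat.add_comm 1 m)) with he
  have he0 : e (Sum.inl 0) = 0 := by
    apply Fin.ext; simp [he, finSumFinEquiv]
  have heS : ∀ j : Fin m, e (Sum.inr j) = j.succ := by
    intro j; apply Fin.ext; simp [he, finSumFinEquiv, Nat.add_comm]
  -- LHS equals evaluation of domCoprod
  have hL : castForm (Nat.add_comm 1 m) (wedge (oneForm u) α) v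
      = (LinearMap.mul' R R) (((oneForm u).domCoprod α) (fun i => v (e i))) := by
    rfl
  rw [hL]
  -- use alternatization
  have key := congrArg (fun (F : M [⋀^(Fin 1 ⊕ Fin m)]→ₗ[R] (R ⊗[R] R)) => F (fun i => v (e i)))
    (MultilinearMap.domCoprod_alternization_eq (oneForm u) α)
  simp only [AlternatingMap.smul_apply, Fintype.card_fin, Nat.factorial_one, one_mul] at key
  rw [MultilinearMap.alternatization_apply] at key
  -- pull mul' inside
  have : ((Nat.factorial m : ℕ) : R) * ((LinearMap.mul' R R) (((oneForm u).domCoprod α) (fun i => v (e i))))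
      = (LinearMap.mul' R R) ((Nat.factorial m : ℕ) • (((oneForm u).domCoprod α) (fun i => v (e i)))) := by
    rw [map_nsmul]; rw [nsmul_eq_mul]
  rw [this, ← key, map_sum]
  -- compute each summand
  have hsummand : ∀ σ : Equiv.Perm (Fin 1 ⊕ Fin m),
      (LinearMap.mul' R R) ((Equiv.Perm.sign σ) •
        (MultilinearMap.domCoprod (oneForm u) α).domDomCongr σ (fun i => v (e i)))
      = (Equiv.Perm.sign σ : ℤ) • (u (v (e (σ (Sum.inl 0)))) * α (fun j => v (e (σ (Sum.inr j))))) := by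
    intro σ
    rw [Units.smul_def, map_zsmul]
    congr 1
  simp only [hsummand]
  -- reindex the permutation sum
  have hre : ∑ σ : Equiv.Perm (Fin 1 ⊕ Fin m),
      (Equiv.Perm.sign σ : ℤ) • (u (v (e (σ (Sum.inl 0)))) * α (fun j => v (e (σ (Sum.inr j)))))
      = ∑ π : Equiv.Perm (Fin (m + 1)),
      (Equiv.Perm.sign π : ℤ) • (u (v (π 0)) * α (fun j => v (π j.succ))) := by
    refine Fintype.sum_equiv (Equiv.permCongr e) _ _ (fun σ => ?_)
    have h1 : ∀ i, (Equiv.permCongr e σ) (e i) = e (σ i) := by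
      intro i; simp [Equiv.permCongr_apply]
    have hu : (Equiv.permCongr e σ) 0 = e (σ (Sum.inl 0)) := by rw [← he0, h1]
    have ha : ∀ j : Fin m, (Equiv.permCongr e σ) j.succ = e (σ (Sum.inr j)) := by
      intro j; rw [← heS j, h1]
    rw [Equiv.Perm.sign_permCongr, hu]
    have hfe : (fun j => v ((Equiv.permCongr e σ) j.succ)) = fun j => v (e (σ (Sum.inr j))) := by
      funext j; rw [ha]
    rw [hfe]
  rw [hre, ← Equiv.sum_comp (Equiv.Perm.decomposeFin).symm
      (fun π => (Equiv.Perm.sign π : ℤ) • (u (v (π 0)) * α (fun j => v (π j.succ)))),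
    Fintype.sum_prod_type, Finset.mul_sum]
  refine Finset.sum_congr rfl (fun i _ => ?_)
  have hterm : ∀ τ : Equiv.Perm (Fin m),
      ((Equiv.Perm.sign (Equiv.Perm.decomposeFin.symm (i, τ))) : ℤ) •
        (u (v (Equiv.Perm.decomposeFin.symm (i, τ) 0)) *
          α (fun j => v (Equiv.Perm.decomposeFin.symm (i, τ) j.succ)))
      = (if i = 0 then (1 : R) else -1) *
          (u (v i) * α (fun j => v (Equiv.swap 0 i j.succ))) := by
    intro τ
    rw [Equiv.Perm.decomposeFin.symm_sign, Equiv.Perm.decomposeFin_symm_apply_zero]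
    have h1 : (fun j => v (Equiv.Perm.decomposeFin.symm (i, τ) j.succ))
        = (fun j => v (Equiv.swap 0 i j.succ)) ∘ τ := by
      funext j; simp [Equiv.Perm.decomposeFin_symm_apply_succ]
    rw [h1, AlternatingMap.map_perm]
    rcases Int.units_eq_one_or (Equiv.Perm.sign τ) with hs | hs <;>
      rcases eq_or_ne i 0 with hi | hi <;>
        simp [hs, hi] <;> ring
  rw [Finset.sum_congr rfl (fun τ _ => hterm τ), Finset.sum_const, Finset.card_univ,
    Fintype.card_perm, Fintype.card_fin]
  induction i using Fin.cases with
  | zero =>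
      have h2 : (fun j : Fin m => v (Equiv.swap (0 : Fin (m+1)) 0 j.succ)) = fun j => v j.succ := by
        funext j; simp
      have h3 : (fun j : Fin m => v ((0 : Fin (m+1)).succAbove j)) = fun j => v j.succ := by
        funext j; simp
      simp [h2, h3, nsmul_eq_mul]
  | succ k =>
      have hsw : (fun j : Fin m => v (Equiv.swap 0 k.succ j.succ))
          = (fun j => v (k.succ.succAbove j)) ∘ ⇑(Fin.cycleRange k) := by
        funext j
        simp only [Function.comp_apply, Fin.succAbove_cycleRange]
      rw [hsw, AlternatingMap.map_perm, Fin.sign_cycleRange]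
      simp only [Fin.succ_ne_zero, if_false, nsmul_eq_mul, Fin.val_succ, pow_succ,
        Units.smul_def, Units.val_pow_eq_pow_val, Units.val_neg, Units.val_one, zsmul_eq_mul]
      push_cast
      ring


section Helpers
variable {R M : Type*} [CommRing R] [AddCommGroup M] [Module R M]

theorem eta1 (w : Fin 1 → M) : w = ![w 0] := by
  funext i
  have : i = 0 := Subsingleton.elim i 0
  subst this; rfl

-- evaluation helpers for 1-,2-,3-forms
theorem map1_add (γ : M [⋀^Fin 1]→ₗ[R] R) (x y : M) : γ ![x + y] = γ ![x] + γ ![y] := by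
  show γ.curryLeft (x + y) ![] = γ.curryLeft x ![] + γ.curryLeft y ![]
  rw [map_add]; rfl

theorem map1_smul (γ : M [⋀^Fin 1]→ₗ[R] R) (c : R) (x : M) : γ ![c • x] = c * γ ![x] := by
  show γ.curryLeft (c • x) ![] = c * γ.curryLeft x ![]
  rw [map_smul]; rfl

theorem map1_zero (γ : M [⋀^Fin 1]→ₗ[R] R) : γ ![(0 : M)] = 0 := by
  show γ.curryLeft 0 ![] = 0
  rw [map_zero]; rfl

theorem map2_addl (B : M [⋀^Fin 2]→ₗ[R] R) (x x' y : M) :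
    B ![x + x', y] = B ![x, y] + B ![x', y] := by
  show B.curryLeft (x + x') ![y] = B.curryLeft x ![y] + B.curryLeft x' ![y]
  rw [map_add]; rfl

theorem map2_smull (B : M [⋀^Fin 2]→ₗ[R] R) (c : R) (x y : M) :
    B ![c • x, y] = c * B ![x, y] := by
  show B.curryLeft (c • x) ![y] = c * B.curryLeft x ![y]
  rw [map_smul]; rfl

theorem map2_zerol (B : M [⋀^Fin 2]→ₗ[R] R) (y : M) : B ![(0 : M), y] = 0 := by
  show B.curryLeft 0 ![y] = 0
  rw [map_zero]; rfl

theorem map2_addr (B : M [⋀^Fin 2]→ₗ[R] R) (x y y' : M) :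
    B ![x, y + y'] = B ![x, y] + B ![x, y'] := map1_add (B.curryLeft x) y y'

theorem map2_smulr (B : M [⋀^Fin 2]→ₗ[R] R) (c : R) (x y : M) :
    B ![x, c • y] = c * B ![x, y] := map1_smul (B.curryLeft x) c y

theorem map2_zeror (B : M [⋀^Fin 2]→ₗ[R] R) (x : M) : B ![x, (0 : M)] = 0 :=
  map1_zero (B.curryLeft x)

theorem map3_add1 (H : M [⋀^Fin 3]→ₗ[R] R) (x x' y z : M) :
    H ![x + x', y, z] = H ![x, y, z] + H ![x', y, z] := by
  show H.curryLeft (x + x') ![y, z] = H.curryLeft x ![y, z] + H.curryLeft x' ![y, z]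
  rw [map_add]; rfl

theorem map3_smul1 (H : M [⋀^Fin 3]→ₗ[R] R) (c : R) (x y z : M) :
    H ![c • x, y, z] = c * H ![x, y, z] := by
  show H.curryLeft (c • x) ![y, z] = c * H.curryLeft x ![y, z]
  rw [map_smul]; rfl

theorem map3_zero1 (H : M [⋀^Fin 3]→ₗ[R] R) (y z : M) : H ![(0 : M), y, z] = 0 := by
  show H.curryLeft 0 ![y, z] = 0
  rw [map_zero]; rfl

theorem map3_add2 (H : M [⋀^Fin 3]→ₗ[R] R) (x y y' z : M) :
    H ![x, y + y', z] = H ![x, y, z] + H ![x, y', z] := map2_addl (H.curryLeft x) y y' z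

theorem map3_smul2 (H : M [⋀^Fin 3]→ₗ[R] R) (c : R) (x y z : M) :
    H ![x, c • y, z] = c * H ![x, y, z] := map2_smull (H.curryLeft x) c y z

theorem map3_zero2 (H : M [⋀^Fin 3]→ₗ[R] R) (x z : M) : H ![x, (0 : M), z] = 0 :=
  map2_zerol (H.curryLeft x) z

theorem map3_add3 (H : M [⋀^Fin 3]→ₗ[R] R) (x y z z' : M) :
    H ![x, y, z + z'] = H ![x, y, z] + H ![x, y, z'] := map2_addr (H.curryLeft x) y z z'

theorem map3_smul3 (H : M [⋀^Fin 3]→ₗ[R] R) (c : R) (x y z : M) :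
    H ![x, y, c • z] = c * H ![x, y, z] := map2_smulr (H.curryLeft x) c y z

theorem map3_zero3 (H : M [⋀^Fin 3]→ₗ[R] R) (x y : M) : H ![x, y, (0 : M)] = 0 :=
  map2_zeror (H.curryLeft x) y

theorem swap2 (B : M [⋀^Fin 2]→ₗ[R] R) (x y : M) : B ![y, x] = -B ![x, y] := by
  have h : ![y, x] = ![x, y] ∘ Equiv.swap (0 : Fin 2) 1 := by
    funext i; fin_cases i <;> simp [Equiv.swap_apply_def] <;> rfl
  rw [h, AlternatingMap.map_swap]
  exact Fin.zero_ne_one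

theorem swap3_01 (H : M [⋀^Fin 3]→ₗ[R] R) (x y z : M) : H ![y, x, z] = -H ![x, y, z] := by
  have h : ![y, x, z] = ![x, y, z] ∘ Equiv.swap (0 : Fin 3) 1 := by
    funext i; fin_cases i <;> simp [Equiv.swap_apply_def] <;> rfl
  rw [h, AlternatingMap.map_swap]
  exact Fin.zero_ne_one

theorem swap3_12 (H : M [⋀^Fin 3]→ₗ[R] R) (x y z : M) : H ![x, z, y] = -H ![x, y, z] := by
  have h : ![x, z, y] = ![x, y, z] ∘ Equiv.swap (1 : Fin 3) 2 := by
    funext i; fin_cases i <;> simp [Equiv.swap_apply_def] <;> rfl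
  rw [h, AlternatingMap.map_swap]
  decide

end Helpers


section Koszul
set_option linter.unusedSectionVars false
variable {R W : Type*} [CommRing R] [LieRing W] [LieAlgebra R W]

theorem kosArg_01 (v : Fin 2 → W) : kosArg v 0 1 = ![⁅v 0, v 1⁆] := by
  funext k
  have hk : k = 0 := Subsingleton.elim k 0
  subst hk
  simp [kosArg]

theorem ced_one_apply {d : (W [⋀^Fin 1]→ₗ[R] R) → (W [⋀^Fin 2]→ₗ[R] R)}
    (hd : IsCEDiff d) (γ : W [⋀^Fin 1]→ₗ[R] R) (x y : W) :
    d γ ![x, y] = -γ ![⁅x, y⁆] := by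
  rw [hd]
  have hfil : (Finset.univ.filter (fun p : Fin 2 × Fin 2 => p.1 < p.2))
      = {((0 : Fin 2), (1 : Fin 2))} := by decide
  rw [hfil, Finset.sum_singleton, kosArg_01]
  norm_num

-- kosArg values on Fin 4 tuples
theorem kosArg_12 (v : Fin 4 → W) : kosArg v 1 2 = ![⁅v 1, v 2⁆, v 0, v 3] := by
  funext k; fin_cases k <;> simp [kosArg] <;> congr 1 <;> omega

theorem kosArg_13 (v : Fin 4 → W) : kosArg v 1 3 = ![⁅v 1, v 3⁆, v 0, v 2] := by
  funext k; fin_cases k <;> simp [kosArg] <;> congr 1 <;> omega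

theorem kosArg_23 (v : Fin 4 → W) : kosArg v 2 3 = ![⁅v 2, v 3⁆, v 0, v 1] := by
  funext k; fin_cases k <;> simp [kosArg] <;> congr 1 <;> omega

theorem kosArg_fst (v : Fin 4 → W) (i j : Fin 4) : kosArg v i j 0 = ⁅v i, v j⁆ := by
  simp [kosArg]

theorem alt_zero_first {m : ℕ} (f : W [⋀^Fin (m + 1)]→ₗ[R] R) (t : Fin (m + 1) → W)
    (h : t 0 = 0) : f t = 0 := by
  have ht : t = Matrix.vecCons (0 : W) (Matrix.vecTail t) := by
    rw [← h]
    exact (Matrix.cons_head_tail t).symm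
  rw [ht]
  show f.curryLeft 0 (Matrix.vecTail t) = 0
  rw [map_zero]; rfl

theorem ced_three_apply {δ : (W [⋀^Fin 3]→ₗ[R] R) → (W [⋀^Fin 4]→ₗ[R] R)}
    (hδ : IsCEDiff δ) (H : W [⋀^Fin 3]→ₗ[R] R) (v : Fin 4 → W) (h0 : ∀ x : W, ⁅v 0, x⁆ = 0) :
    δ H v = -H ![⁅v 1, v 2⁆, v 0, v 3] + H ![⁅v 1, v 3⁆, v 0, v 2] - H ![⁅v 2, v 3⁆, v 0, v 1] := by
  rw [hδ]
  have hfil : (Finset.univ.filter (fun p : Fin 4 × Fin 4 => p.1 < p.2))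
      = {((0 : Fin 4), (1 : Fin 4)), (0, 2), (0, 3), (1, 2), (1, 3), (2, 3)} := by decide
  rw [hfil]
  have z1 : H (kosArg v 0 1) = 0 := alt_zero_first _ _ (by rw [kosArg_fst, h0])
  have z2 : H (kosArg v 0 2) = 0 := alt_zero_first _ _ (by rw [kosArg_fst, h0])
  have z3 : H (kosArg v 0 3) = 0 := alt_zero_first _ _ (by rw [kosArg_fst, h0])
  rw [show ({((0 : Fin 4), (1 : Fin 4)), (0, 2), (0, 3), (1, 2), (1, 3), (2, 3)} : Finset (Fin 4 × Fin 4)).sum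
      (fun p => ((-1 : R) ^ ((p.1 : ℕ) + (p.2 : ℕ))) • H (kosArg v p.1 p.2)) = _ from rfl]
  rw [Finset.sum_insert (by decide), Finset.sum_insert (by decide), Finset.sum_insert (by decide),
    Finset.sum_insert (by decide), Finset.sum_insert (by decide), Finset.sum_singleton]
  rw [z1, z2, z3, kosArg_12, kosArg_13, kosArg_23]
  norm_num [show ((3 : Fin 4) : ℕ) = 3 from rfl, show ((2 : Fin 4) : ℕ) = 2 from rfl,
    show ((1 : Fin 4) : ℕ) = 1 from rfl]
  ring

end Koszul

section DformEval
set_option linter.unusedSectionVars false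
variable {R W : Type*} [Field R] [CharZero R] [LieRing W] [LieAlgebra R W]

theorem Dform_one_apply (u : W →ₗ[R] R) {d : (W [⋀^Fin 1]→ₗ[R] R) → (W [⋀^Fin 2]→ₗ[R] R)}
    (hd : IsCEDiff d) (γ : W [⋀^Fin 1]→ₗ[R] R) (x y : W) :
    Dform u d γ ![x, y] = -γ ![⁅x, y⁆] + (u x * γ ![y] - u y * γ ![x]) := by
  show d γ ![x, y] + castForm (Nat.add_comm 1 1) (wedge (oneForm u) γ) ![x, y] = _
  rw [ced_one_apply hd, wedge_oneForm_apply, Fin.sum_univ_two]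
  have h0 : (fun j => ![x, y] ((0 : Fin 2).succAbove j)) = ![y] := by
    funext j
    have : j = 0 := Subsingleton.elim j 0
    subst this; rfl
  have h1 : (fun j => ![x, y] ((1 : Fin 2).succAbove j)) = ![x] := by
    funext j
    have : j = 0 := Subsingleton.elim j 0
    subst this; rfl
  rw [h0, h1]
  norm_num
  ring

end DformEval

section RealKey
set_option linter.unusedSectionVars false
variable {g : Type*} [LieRing g] [LieAlgebra ℝ g]

/-- `1 = (0,1) ∈ g_ℝ`. -/
local notation "e𝟙" => (((0 : g), (1 : ℝ)) : g × ℝ)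

theorem one_bracket (x : g × ℝ) : ⁅e𝟙, x⁆ = 0 := by
  show (⁅(0 : g), x.1⁆, (0 : ℝ)) = (0, 0)
  rw [zero_lie]

theorem realKey {δ3 : ((g × ℝ) [⋀^Fin 3]→ₗ[ℝ] ℝ) → ((g × ℝ) [⋀^Fin 4]→ₗ[ℝ] ℝ)}
    (hδ3 : IsCEDiff δ3) (H : (g × ℝ) [⋀^Fin 3]→ₗ[ℝ] ℝ)
    (hH : Dform (oneStarR g) δ3 H = 0) (p q r : g × ℝ) :
    H ![p, q, r] = -H ![e𝟙, ⁅p, q⁆, r] + H ![e𝟙, ⁅p, r⁆, q] - H ![e𝟙, ⁅q, r⁆, p]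
      + p.2 * H ![e𝟙, q, r] - q.2 * H ![e𝟙, p, r] + r.2 * H ![e𝟙, p, q] := by
  have h := congrArg (fun F : (g × ℝ) [⋀^Fin 4]→ₗ[ℝ] ℝ => F ![e𝟙, p, q, r]) hH
  simp only [AlternatingMap.zero_apply] at h
  have h' : δ3 H ![e𝟙, p, q, r]
      + castForm (Nat.add_comm 1 3) (wedge (oneForm (oneStarR g)) H) ![e𝟙, p, q, r] = 0 := h
  rw [ced_three_apply hδ3 H ![e𝟙, p, q, r] (fun x => one_bracket x),
    wedge_oneForm_apply, Fin.sum_univ_four] at h'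
  have t0 : (fun j => ![e𝟙, p, q, r] ((0 : Fin 4).succAbove j)) = ![p, q, r] := by
    funext j; fin_cases j <;> rfl
  have t1 : (fun j => ![e𝟙, p, q, r] ((1 : Fin 4).succAbove j)) = ![e𝟙, q, r] := by
    funext j; fin_cases j <;> rfl
  have t2 : (fun j => ![e𝟙, p, q, r] ((2 : Fin 4).succAbove j)) = ![e𝟙, p, r] := by
    funext j; fin_cases j <;> rfl
  have t3 : (fun j => ![e𝟙, p, q, r] ((3 : Fin 4).succAbove j)) = ![e𝟙, p, q] := by
    funext j; fin_cases j <;> rfl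
  rw [t0, t1, t2, t3] at h'
  have hu0 : oneStarR g e𝟙 = 1 := rfl
  have hup : ∀ x : g × ℝ, oneStarR g x = x.2 := fun _ => rfl
  have hv2 : (![e𝟙, p, q, r] : Fin 4 → g × ℝ) 2 = q := rfl
  have hv3 : (![e𝟙, p, q, r] : Fin 4 → g × ℝ) 3 = r := rfl
  simp only [Matrix.cons_val_zero, Matrix.cons_val_one, Matrix.head_cons, hu0, hup, hv2, hv3,
    show ((0 : Fin 4) : ℕ) = 0 from rfl, show ((1 : Fin 4) : ℕ) = 1 from rfl,
    show ((2 : Fin 4) : ℕ) = 2 from rfl, show ((3 : Fin 4) : ℕ) = 3 from rfl] at h'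
  norm_num at h'
  have s1 := swap3_01 H e𝟙 ⁅p, q⁆ r
  have s2 := swap3_01 H e𝟙 ⁅p, r⁆ q
  have s3 := swap3_01 H e𝟙 ⁅q, r⁆ p
  linarith [h', s1, s2, s3]

end RealKey

section MkMaps
variable {R M : Type*} [CommRing R] [AddCommGroup M] [Module R M]

/-- Package a bilinear function as a bundled bilinear map. -/
def mkBil (f : M → M → R)
    (h1 : ∀ x x' y, f (x + x') y = f x y + f x' y)
    (h2 : ∀ c x y, f (c • x) y = c * f x y)
    (h3 : ∀ x y y', f x (y + y') = f x y + f x y')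
    (h4 : ∀ c x y, f x (c • y) = c * f x y) : M →ₗ[R] M →ₗ[R] R where
  toFun x :=
    { toFun := f x
      map_add' := h3 x
      map_smul' := fun c y => h4 c x y }
  map_add' x x' := by ext y; exact h1 x x' y
  map_smul' c x := by ext y; exact h2 c x y

@[simp] theorem mkBil_apply (f : M → M → R) (h1 h2 h3 h4) (x y : M) :
    mkBil f h1 h2 h3 h4 x y = f x y := rfl

/-- Package a trilinear function as a bundled trilinear map. -/
def mkTri (f : M → M → M → R)
    (a1 : ∀ x x' y z, f (x + x') y z = f x y z + f x' y z)
    (s1 : ∀ c x y z, f (c • x) y z = c * f x y z)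
    (a2 : ∀ x y y' z, f x (y + y') z = f x y z + f x y' z)
    (s2 : ∀ c x y z, f x (c • y) z = c * f x y z)
    (a3 : ∀ x y z z', f x y (z + z') = f x y z + f x y z')
    (s3 : ∀ c x y z, f x y (c • z) = c * f x y z) : M →ₗ[R] M →ₗ[R] M →ₗ[R] R where
  toFun x := mkBil (f x) (a2 x) (fun c y z => s2 c x y z) (a3 x) (fun c y z => s3 c x y z)
  map_add' x x' := by ext y z; exact a1 x x' y z
  map_smul' c x := by ext y z; exact s1 c x y z

@[simp] theorem mkTri_apply (f : M → M → M → R) (a1 s1 a2 s2 a3 s3) (x y z : M) :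
    mkTri f a1 s1 a2 s2 a3 s3 x y z = f x y z := rfl

end MkMaps

section ComplexSide
set_option linter.unusedSectionVars false
variable {g : Type*} [LieRing g] [LieAlgebra ℝ g]

theorem span_incC_top : Submodule.span ℂ (Set.range (incC g)) = ⊤ := by
  rw [Submodule.eq_top_iff']
  have hfst : ∀ t : ℂ ⊗[ℝ] g, ((t, 0) : gC g) ∈ Submodule.span ℂ (Set.range (incC g)) := by
    intro t
    induction t using TensorProduct.induction_on with
    | zero =>
        have : ((0, 0) : gC g) = 0 := rfl
        rw [this]; exact Submodule.zero_mem _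
    | tmul a x =>
        have : ((a ⊗ₜ[ℝ] x, 0) : gC g) = a • incC g (x, 0) := by
          ext
          · show a ⊗ₜ[ℝ] x = a • ((1 : ℂ) ⊗ₜ[ℝ] x)
            rw [TensorProduct.smul_tmul', smul_eq_mul, mul_one]
          · show (0 : ℂ) = a • ((0 : ℝ) : ℂ)
            simp
        rw [this]
        exact Submodule.smul_mem _ _ (Submodule.subset_span ⟨(x, 0), rfl⟩)
    | add t t' ht ht' =>
        have : ((t + t', 0) : gC g) = (t, 0) + (t', 0) := by ext <;> simp
        rw [this]
        exact Submodule.add_mem _ ht ht'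
  intro x
  obtain ⟨t, c⟩ := x
  have h1 : ((t, c) : gC g) = (t, 0) + (0, c) := by ext <;> simp
  rw [h1]
  refine Submodule.add_mem _ (hfst t) ?_
  · have : ((0, c) : gC g) = c • incC g (0, 1) := by
      ext
      · show (0 : ℂ ⊗[ℝ] g) = c • ((1 : ℂ) ⊗ₜ[ℝ] (0 : g))
        simp
      · show c = c • ((1 : ℝ) : ℂ)
        simp
    rw [this]
    exact Submodule.smul_mem _ _ (Submodule.subset_span ⟨(0, 1), rfl⟩)

theorem ext_incC₂ {f h : gC g →ₗ[ℂ] gC g →ₗ[ℂ] ℂ}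
    (He : ∀ p q : g × ℝ, f (incC g p) (incC g q) = h (incC g p) (incC g q)) : f = h := by
  refine LinearMap.ext_on span_incC_top ?_
  rintro x ⟨p, rfl⟩
  refine LinearMap.ext_on span_incC_top ?_
  rintro y ⟨q, rfl⟩
  exact He p q

theorem ext_incC₃ {f h : gC g →ₗ[ℂ] gC g →ₗ[ℂ] gC g →ₗ[ℂ] ℂ}
    (He : ∀ p q r : g × ℝ, f (incC g p) (incC g q) (incC g r)
      = h (incC g p) (incC g q) (incC g r)) : f = h := by
  refine LinearMap.ext_on span_incC_top ?_
  rintro x ⟨p, rfl⟩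
  refine LinearMap.ext_on span_incC_top ?_
  rintro y ⟨q, rfl⟩
  refine LinearMap.ext_on span_incC_top ?_
  rintro z ⟨r, rfl⟩
  exact He p q r

theorem incC_bracket (p q : g × ℝ) : ⁅incC g p, incC g q⁆ = incC g ⁅p, q⁆ := by
  ext
  · show ⁅(1 : ℂ) ⊗ₜ[ℝ] p.1, (1 : ℂ) ⊗ₜ[ℝ] q.1⁆ = (1 : ℂ) ⊗ₜ[ℝ] ⁅p.1, q.1⁆
    rw [LieAlgebra.ExtendScalars.bracket_tmul, mul_one]
  · show (0 : ℂ) = ((0 : ℝ) : ℂ)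
    simp

theorem oneStarC_incC (p : g × ℝ) : oneStarC g (incC g p) = (p.2 : ℂ) := rfl

theorem cxConj_involutive (t : ℂ ⊗[ℝ] g) : cxConj g (cxConj g t) = t := by
  show LinearMap.rTensor g Complex.conjAe.toLinearMap
    (LinearMap.rTensor g Complex.conjAe.toLinearMap t) = t
  induction t using TensorProduct.induction_on with
  | zero => simp
  | tmul a x => simp [LinearMap.rTensor_tmul]
  | add t t' ht ht' => simp [map_add, ht, ht']

theorem conjGC_involutive (x : gC g) : conjGC (conjGC x) = x := by
  ext
  · exact cxConj_involutive x.1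
  · simp [conjGC]

theorem conjGC_incC (p : g × ℝ) : conjGC (incC g p) = incC g p := by
  ext
  · show LinearMap.rTensor g Complex.conjAe.toLinearMap ((1 : ℂ) ⊗ₜ[ℝ] p.1) = (1 : ℂ) ⊗ₜ[ℝ] p.1
    simp [LinearMap.rTensor_tmul]
  · show (starRingEnd ℂ) ((p.2 : ℝ) : ℂ) = ((p.2 : ℝ) : ℂ)
    simp [Complex.conj_ofReal]

end ComplexSide

section StarId
set_option linter.unusedSectionVars false
variable {g : Type*} [LieRing g] [LieAlgebra ℝ g]

theorem ext2_pair {ext2 : ((g × ℝ) [⋀^Fin 2]→ₗ[ℝ] ℝ) → ((gC g) [⋀^Fin 2]→ₗ[ℂ] ℂ)}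
    (hext2 : ∀ (α : (g × ℝ) [⋀^Fin 2]→ₗ[ℝ] ℝ) (v : Fin 2 → g × ℝ),
      ext2 α (fun i => incC g (v i)) = ((α v : ℝ) : ℂ))
    (α : (g × ℝ) [⋀^Fin 2]→ₗ[ℝ] ℝ) (p q : g × ℝ) :
    ext2 α ![incC g p, incC g q] = ((α ![p, q] : ℝ) : ℂ) := by
  have hfe : (fun i => incC g (![p, q] i)) = ![incC g p, incC g q] := by
    funext i; fin_cases i <;> rfl
  rw [← hfe]
  exact hext2 α ![p, q]

theorem ext3_triple {ext3 : ((g × ℝ) [⋀^Fin 3]→ₗ[ℝ] ℝ) → ((gC g) [⋀^Fin 3]→ₗ[ℂ] ℂ)}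
    (hext3 : ∀ (α : (g × ℝ) [⋀^Fin 3]→ₗ[ℝ] ℝ) (v : Fin 3 → g × ℝ),
      ext3 α (fun i => incC g (v i)) = ((α v : ℝ) : ℂ))
    (α : (g × ℝ) [⋀^Fin 3]→ₗ[ℝ] ℝ) (p q r : g × ℝ) :
    ext3 α ![incC g p, incC g q, incC g r] = ((α ![p, q, r] : ℝ) : ℂ) := by
  have hfe : (fun i => incC g (![p, q, r] i)) = ![incC g p, incC g q, incC g r] := by
    funext i; fin_cases i <;> rfl
  rw [← hfe]
  exact hext3 α ![p, q, r]

theorem star_id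
    {ext2 : ((g × ℝ) [⋀^Fin 2]→ₗ[ℝ] ℝ) → ((gC g) [⋀^Fin 2]→ₗ[ℂ] ℂ)}
    (hext2 : ∀ (α : (g × ℝ) [⋀^Fin 2]→ₗ[ℝ] ℝ) (v : Fin 2 → g × ℝ),
      ext2 α (fun i => incC g (v i)) = ((α v : ℝ) : ℂ))
    {ext3 : ((g × ℝ) [⋀^Fin 3]→ₗ[ℝ] ℝ) → ((gC g) [⋀^Fin 3]→ₗ[ℂ] ℂ)}
    (hext3 : ∀ (α : (g × ℝ) [⋀^Fin 3]→ₗ[ℝ] ℝ) (v : Fin 3 → g × ℝ),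
      ext3 α (fun i => incC g (v i)) = ((α v : ℝ) : ℂ))
    {δ3 : ((g × ℝ) [⋀^Fin 3]→ₗ[ℝ] ℝ) → ((g × ℝ) [⋀^Fin 4]→ₗ[ℝ] ℝ)} (hδ3 : IsCEDiff δ3)
    (H : (g × ℝ) [⋀^Fin 3]→ₗ[ℝ] ℝ) (hH : Dform (oneStarR g) δ3 H = 0)
    (X Y Z : gC g) :
    ext3 H ![Y, X, Z]
      = ext2 (-(H.curryLeft ((0, 1) : g × ℝ))) ![X, ⁅Y, Z⁆]
        - ext2 (-(H.curryLeft ((0, 1) : g × ℝ))) ![Y, ⁅X, Z⁆]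
        - ext2 (-(H.curryLeft ((0, 1) : g × ℝ))) ![⁅X, Y⁆, Z]
        + oneStarC g X * ext2 (-(H.curryLeft ((0, 1) : g × ℝ))) ![Y, Z]
        - oneStarC g Y * ext2 (-(H.curryLeft ((0, 1) : g × ℝ))) ![X, Z]
        + oneStarC g Z * ext2 (-(H.curryLeft ((0, 1) : g × ℝ))) ![X, Y] := by
  set B : (gC g) [⋀^Fin 2]→ₗ[ℂ] ℂ := ext2 (-(H.curryLeft ((0, 1) : g × ℝ))) with hB
  set Θ : (gC g) [⋀^Fin 3]→ₗ[ℂ] ℂ := ext3 H with hΘ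
  set u : gC g →ₗ[ℂ] ℂ := oneStarC g with hu
  have key : mkTri (fun X Y Z : gC g => Θ ![Y, X, Z])
      (fun x x' y z => map3_add2 Θ y x x' z) (fun c x y z => map3_smul2 Θ c y x z)
      (fun x y y' z => map3_add1 Θ y y' x z) (fun c x y z => map3_smul1 Θ c y x z)
      (fun x y z z' => map3_add3 Θ y x z z') (fun c x y z => map3_smul3 Θ c y x z)
    = mkTri (fun X Y Z : gC g => B ![X, ⁅Y, Z⁆] - B ![Y, ⁅X, Z⁆] - B ![⁅X, Y⁆, Z]
        + u X * B ![Y, Z] - u Y * B ![X, Z] + u Z * B ![X, Y])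
      (by intro x x' y z
          simp only [map2_addl, map2_addr, add_lie, map_add]
          ring)
      (by intro c x y z
          simp only [map2_smull, map2_smulr, smul_lie, map_smul, smul_eq_mul]
          ring)
      (by intro x y y' z
          simp only [map2_addl, map2_addr, add_lie, lie_add, map_add]
          ring)
      (by intro c x y z
          simp only [map2_smull, map2_smulr, smul_lie, lie_smul, map_smul, smul_eq_mul]
          ring)
      (by intro x y z z'
          simp only [map2_addl, map2_addr, lie_add, map_add]
          ring)
      (by intro c x y z
          simp only [map2_smull, map2_smulr, lie_smul, map_smul, smul_eq_mul]
          ring) := by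
    apply ext_incC₃
    intro p q r
    rw [mkTri_apply, mkTri_apply]
    rw [incC_bracket, incC_bracket, incC_bracket]
    rw [hB, hΘ, hu]
    rw [ext3_triple hext3, ext2_pair hext2, ext2_pair hext2, ext2_pair hext2,
      ext2_pair hext2, ext2_pair hext2, ext2_pair hext2,
      oneStarC_incC, oneStarC_incC, oneStarC_incC]
    have hβ : ∀ x y : g × ℝ,
        (-(H.curryLeft ((0, 1) : g × ℝ))) ![x, y] = -(H ![((0, 1) : g × ℝ), x, y]) := by
      intro x y; rfl
    rw [hβ, hβ, hβ, hβ, hβ, hβ]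
    have hkey := realKey hδ3 H hH p q r
    have s1 := swap3_01 H p q r
    have s2 := swap3_12 H ((0, 1) : g × ℝ) ⁅q, r⁆ p
    have s3 := swap3_12 H ((0, 1) : g × ℝ) ⁅p, r⁆ q
    have hreal : (H ![q, p, r] : ℝ)
        = -(H ![((0, 1) : g × ℝ), p, ⁅q, r⁆]) - -(H ![((0, 1) : g × ℝ), q, ⁅p, r⁆])
          - -(H ![((0, 1) : g × ℝ), ⁅p, q⁆, r]) + p.2 * -(H ![((0, 1) : g × ℝ), q, r])
          - q.2 * -(H ![((0, 1) : g × ℝ), p, r]) + r.2 * -(H ![((0, 1) : g × ℝ), p, q]) := by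
      linear_combination s1 - hkey + s2 - s3
    push_cast
    exact_mod_cast hreal
  exact LinearMap.congr_fun (LinearMap.congr_fun (LinearMap.congr_fun key X) Y) Z

end StarId

section DorfmanEval
set_option linter.unusedSectionVars false
variable {g : Type*} [LieRing g] [LieAlgebra ℝ g]

theorem lieDer_apply {d : ((gC g) [⋀^Fin 1]→ₗ[ℂ] ℂ) → ((gC g) [⋀^Fin 2]→ₗ[ℂ] ℂ)}
    (hd : IsCEDiff d) (X : gC g) (γ : (gC g) [⋀^Fin 1]→ₗ[ℂ] ℂ) (z : gC g) :
    lieDer d X γ ![z] = -γ ![⁅X, z⁆] + oneStarC g X * γ ![z] := by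
  have h0 : lieDer d X γ ![z]
      = (Dform (oneStarC g) d γ).curryLeft X ![z]
        + DformZero (oneStarC g) (γ.curryLeft X) ![z] := rfl
  have h1 : (Dform (oneStarC g) d γ).curryLeft X ![z] = Dform (oneStarC g) d γ ![X, z] := rfl
  have h2 : DformZero (oneStarC g) (γ.curryLeft X) ![z] = γ ![X] * oneStarC g z := by
    show (γ.curryLeft X ![]) • ((oneForm (oneStarC g)) ![z]) = _
    rw [smul_eq_mul]
    rfl
  rw [h0, h1, h2, Dform_one_apply (oneStarC g) hd]
  ring

theorem dorfman_snd_apply {d : ((gC g) [⋀^Fin 1]→ₗ[ℂ] ℂ) → ((gC g) [⋀^Fin 2]→ₗ[ℂ] ℂ)}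
    (hd : IsCEDiff d) (Θ : (gC g) [⋀^Fin 3]→ₗ[ℂ] ℂ)
    (a b : gC g × ((gC g) [⋀^Fin 1]→ₗ[ℂ] ℂ)) (z : gC g) :
    (dorfman d Θ a b).2 ![z]
      = (-b.2 ![⁅a.1, z⁆] + oneStarC g a.1 * b.2 ![z])
        - (-a.2 ![⁅b.1, z⁆] + (oneStarC g b.1 * a.2 ![z] - oneStarC g z * a.2 ![b.1]))
        + Θ ![b.1, a.1, z] := by
  have h0 : (dorfman d Θ a b).2 ![z]
      = lieDer d a.1 b.2 ![z] - (Dform (oneStarC g) d a.2).curryLeft b.1 ![z]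
        + (Θ.curryLeft b.1).curryLeft a.1 ![z] := rfl
  have h1 : (Dform (oneStarC g) d a.2).curryLeft b.1 ![z]
      = Dform (oneStarC g) d a.2 ![b.1, z] := rfl
  have h2 : (Θ.curryLeft b.1).curryLeft a.1 ![z] = Θ ![b.1, a.1, z] := rfl
  rw [h0, h1, h2, lieDer_apply hd, Dform_one_apply (oneStarC g) hd]

theorem bTransform_fst (B : (gC g) [⋀^Fin 2]→ₗ[ℂ] ℂ)
    (a : gC g × ((gC g) [⋀^Fin 1]→ₗ[ℂ] ℂ)) : (bTransform B a).1 = a.1 := rfl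

theorem bTransform_snd_apply (B : (gC g) [⋀^Fin 2]→ₗ[ℂ] ℂ)
    (a : gC g × ((gC g) [⋀^Fin 1]→ₗ[ℂ] ℂ)) (y : gC g) :
    (bTransform B a).2 ![y] = a.2 ![y] + B ![a.1, y] := rfl

theorem dorfman_bTransform
    {ext2 : ((g × ℝ) [⋀^Fin 2]→ₗ[ℝ] ℝ) → ((gC g) [⋀^Fin 2]→ₗ[ℂ] ℂ)}
    (hext2 : ∀ (α : (g × ℝ) [⋀^Fin 2]→ₗ[ℝ] ℝ) (v : Fin 2 → g × ℝ),
      ext2 α (fun i => incC g (v i)) = ((α v : ℝ) : ℂ))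
    {ext3 : ((g × ℝ) [⋀^Fin 3]→ₗ[ℝ] ℝ) → ((gC g) [⋀^Fin 3]→ₗ[ℂ] ℂ)}
    (hext3 : ∀ (α : (g × ℝ) [⋀^Fin 3]→ₗ[ℝ] ℝ) (v : Fin 3 → g × ℝ),
      ext3 α (fun i => incC g (v i)) = ((α v : ℝ) : ℂ))
    {δ3 : ((g × ℝ) [⋀^Fin 3]→ₗ[ℝ] ℝ) → ((g × ℝ) [⋀^Fin 4]→ₗ[ℝ] ℝ)} (hδ3 : IsCEDiff δ3)
    {d : ((gC g) [⋀^Fin 1]→ₗ[ℂ] ℂ) → ((gC g) [⋀^Fin 2]→ₗ[ℂ] ℂ)} (hd : IsCEDiff d)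
    (H : (g × ℝ) [⋀^Fin 3]→ₗ[ℝ] ℝ) (hH : Dform (oneStarR g) δ3 H = 0)
    (a b : gC g × ((gC g) [⋀^Fin 1]→ₗ[ℂ] ℂ)) :
    dorfman d 0 (bTransform (ext2 (-(H.curryLeft ((0, 1) : g × ℝ)))) a)
        (bTransform (ext2 (-(H.curryLeft ((0, 1) : g × ℝ)))) b)
      = bTransform (ext2 (-(H.curryLeft ((0, 1) : g × ℝ)))) (dorfman d (ext3 H) a b) := by
  set B : (gC g) [⋀^Fin 2]→ₗ[ℂ] ℂ := ext2 (-(H.curryLeft ((0, 1) : g × ℝ))) with hB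
  have hfst : (dorfman d 0 (bTransform B a) (bTransform B b)).1
      = (bTransform B (dorfman d (ext3 H) a b)).1 := rfl
  have hsnd : (dorfman d 0 (bTransform B a) (bTransform B b)).2
      = (bTransform B (dorfman d (ext3 H) a b)).2 := by
    apply AlternatingMap.ext
    intro w
    rw [eta1 w]
    set z := w 0 with hz
    have hl : (dorfman d 0 (bTransform B a) (bTransform B b)).2 ![z]
        = (-(bTransform B b).2 ![⁅a.1, z⁆] + oneStarC g a.1 * (bTransform B b).2 ![z])
          - (-(bTransform B a).2 ![⁅b.1, z⁆]
            + (oneStarC g b.1 * (bTransform B a).2 ![z]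
              - oneStarC g z * (bTransform B a).2 ![b.1]))
          + (0 : (gC g) [⋀^Fin 3]→ₗ[ℂ] ℂ) ![b.1, a.1, z] :=
      dorfman_snd_apply hd 0 (bTransform B a) (bTransform B b) z
    have hr : (bTransform B (dorfman d (ext3 H) a b)).2 ![z]
        = ((-b.2 ![⁅a.1, z⁆] + oneStarC g a.1 * b.2 ![z])
          - (-a.2 ![⁅b.1, z⁆] + (oneStarC g b.1 * a.2 ![z] - oneStarC g z * a.2 ![b.1]))
          + ext3 H ![b.1, a.1, z]) + B ![⁅a.1, b.1⁆, z] := by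
      rw [bTransform_snd_apply]
      rw [dorfman_snd_apply hd (ext3 H) a b z]
      rfl
    rw [hl, hr]
    simp only [bTransform_snd_apply, bTransform_fst, AlternatingMap.zero_apply]
    have hstar := star_id hext2 hext3 hδ3 H hH a.1 b.1 z
    rw [← hB] at hstar
    rw [hstar]
    ring
  exact Prod.ext hfst hsnd

end DorfmanEval

section ConjPart
set_option linter.unusedSectionVars false
variable {g : Type*} [LieRing g] [LieAlgebra ℝ g]

theorem ext2_conj {ext2 : ((g × ℝ) [⋀^Fin 2]→ₗ[ℝ] ℝ) → ((gC g) [⋀^Fin 2]→ₗ[ℂ] ℂ)}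
    (hext2 : ∀ (α : (g × ℝ) [⋀^Fin 2]→ₗ[ℝ] ℝ) (v : Fin 2 → g × ℝ),
      ext2 α (fun i => incC g (v i)) = ((α v : ℝ) : ℂ))
    (α : (g × ℝ) [⋀^Fin 2]→ₗ[ℝ] ℝ) (x y : gC g) :
    ext2 α ![conjGC x, conjGC y] = (starRingEnd ℂ) (ext2 α ![x, y]) := by
  have key : mkBil (fun x y : gC g => ext2 α ![x, y])
      (map2_addl (ext2 α)) (map2_smull (ext2 α)) (map2_addr (ext2 α)) (map2_smulr (ext2 α))
    = mkBil (fun x y : gC g => (starRingEnd ℂ) (ext2 α ![conjGC x, conjGC y]))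
      (by intro x x' y
          simp only [conjGC_add, map2_addl, map_add])
      (by intro c x y
          simp only [conjGC_smul, map2_smull, map_mul, Complex.conj_conj])
      (by intro x y y'
          simp only [conjGC_add, map2_addr, map_add])
      (by intro c x y
          simp only [conjGC_smul, map2_smulr, map_mul, Complex.conj_conj]) := by
    apply ext_incC₂
    intro p q
    rw [mkBil_apply, mkBil_apply, conjGC_incC, conjGC_incC,
      ext2_pair hext2, Complex.conj_ofReal]
  have h := LinearMap.congr_fun (LinearMap.congr_fun key x) y
  rw [mkBil_apply, mkBil_apply] at h
  rw [h, Complex.conj_conj]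

theorem symm1_apply (γ : (gC g) [⋀^Fin 1]→ₗ[ℂ] ℂ) (x : gC g) :
    ((AlternatingMap.ofSubsingleton ℂ (gC g) ℂ 0).symm γ) x = γ ![x] := by
  show γ (fun _ => x) = γ ![x]
  congr 1
  funext i
  have : i = 0 := Subsingleton.elim i 0
  subst this; rfl

theorem conjOmni_snd_apply (a : gC g × ((gC g) [⋀^Fin 1]→ₗ[ℂ] ℂ)) (z : gC g) :
    (conjOmni a).2 ![z] = (starRingEnd ℂ) (a.2 ![conjGC z]) := by
  show conjDual ((AlternatingMap.ofSubsingleton ℂ (gC g) ℂ 0).symm a.2) z = _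
  show (starRingEnd ℂ) (((AlternatingMap.ofSubsingleton ℂ (gC g) ℂ 0).symm a.2) (conjGC z)) = _
  rw [symm1_apply]

theorem conjOmni_bTransform {ext2 : ((g × ℝ) [⋀^Fin 2]→ₗ[ℝ] ℝ) → ((gC g) [⋀^Fin 2]→ₗ[ℂ] ℂ)}
    (hext2 : ∀ (α : (g × ℝ) [⋀^Fin 2]→ₗ[ℝ] ℝ) (v : Fin 2 → g × ℝ),
      ext2 α (fun i => incC g (v i)) = ((α v : ℝ) : ℂ))
    (α : (g × ℝ) [⋀^Fin 2]→ₗ[ℝ] ℝ) (a : gC g × ((gC g) [⋀^Fin 1]→ₗ[ℂ] ℂ)) :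
    conjOmni (bTransform (ext2 α) a) = bTransform (ext2 α) (conjOmni a) := by
  apply Prod.ext
  · rfl
  · apply AlternatingMap.ext
    intro w
    rw [eta1 w]
    set z := w 0 with hz
    have hl : (conjOmni (bTransform (ext2 α) a)).2 ![z]
        = (starRingEnd ℂ) (a.2 ![conjGC z] + ext2 α ![a.1, conjGC z]) := by
      rw [conjOmni_snd_apply]
      rfl
    have hr : (bTransform (ext2 α) (conjOmni a)).2 ![z]
        = (starRingEnd ℂ) (a.2 ![conjGC z]) + ext2 α ![conjGC a.1, z] := by
      rw [bTransform_snd_apply, conjOmni_snd_apply]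
      rfl
    rw [hl, hr, map_add]
    congr 1
    have h := ext2_conj hext2 α a.1 (conjGC z)
    rw [conjGC_involutive] at h
    exact h.symm

theorem bT_neg_cancel (B : (gC g) [⋀^Fin 2]→ₗ[ℂ] ℂ)
    (a : gC g × ((gC g) [⋀^Fin 1]→ₗ[ℂ] ℂ)) :
    bTransform (-B) (bTransform B a) = a := by
  apply Prod.ext
  · rfl
  · apply AlternatingMap.ext
    intro w
    rw [eta1 w]
    show a.2 ![w 0] + B ![a.1, w 0] + (-B) ![a.1, w 0] = a.2 ![w 0]
    rw [AlternatingMap.neg_apply]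
    ring

theorem bT_pos_cancel (B : (gC g) [⋀^Fin 2]→ₗ[ℂ] ℂ)
    (a : gC g × ((gC g) [⋀^Fin 1]→ₗ[ℂ] ℂ)) :
    bTransform B (bTransform (-B) a) = a := by
  have h := bT_neg_cancel (-B) a
  rwa [neg_neg] at h

theorem bT_injective (B : (gC g) [⋀^Fin 2]→ₗ[ℂ] ℂ) :
    Function.Injective (bTransform (g := g) B) := by
  intro a b h
  have h2 := congrArg (bTransform (-B)) h
  rwa [bT_neg_cancel, bT_neg_cancel] at h2

/-- `bTransform B` as a linear equivalence. -/
def bTEquiv (B : (gC g) [⋀^Fin 2]→ₗ[ℂ] ℂ) :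
    (gC g × ((gC g) [⋀^Fin 1]→ₗ[ℂ] ℂ)) ≃ₗ[ℂ] (gC g × ((gC g) [⋀^Fin 1]→ₗ[ℂ] ℂ)) :=
  LinearEquiv.ofLinear (bTransform B) (bTransform (-B))
    (LinearMap.ext fun a => bT_neg_cancel B a |> fun h => by
      simpa using congrArg id (bT_pos_cancel B a))
    (LinearMap.ext fun a => by simpa using congrArg id (bT_neg_cancel B a))

theorem ext2_neg_apply {ext2 : ((g × ℝ) [⋀^Fin 2]→ₗ[ℝ] ℝ) → ((gC g) [⋀^Fin 2]→ₗ[ℂ] ℂ)}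
    (hext2 : ∀ (α : (g × ℝ) [⋀^Fin 2]→ₗ[ℝ] ℝ) (v : Fin 2 → g × ℝ),
      ext2 α (fun i => incC g (v i)) = ((α v : ℝ) : ℂ))
    (α : (g × ℝ) [⋀^Fin 2]→ₗ[ℝ] ℝ) (x y : gC g) :
    ext2 (-α) ![x, y] = -(ext2 α ![x, y]) := by
  have key : mkBil (fun x y : gC g => ext2 (-α) ![x, y])
      (map2_addl _) (map2_smull _) (map2_addr _) (map2_smulr _)
    = mkBil (fun x y : gC g => -(ext2 α ![x, y]))
      (by intro x x' y; simp only [map2_addl]; ring)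
      (by intro c x y; simp only [map2_smull]; ring)
      (by intro x y y'; simp only [map2_addr]; ring)
      (by intro c x y; simp only [map2_smulr]; ring) := by
    apply ext_incC₂
    intro p q
    rw [mkBil_apply, mkBil_apply, ext2_pair hext2, ext2_pair hext2]
    rw [AlternatingMap.neg_apply]
    push_cast
    ring
  have h := LinearMap.congr_fun (LinearMap.congr_fun key x) y
  rwa [mkBil_apply, mkBil_apply] at h

end ConjPart

-- MORE AUX HERE

end Aux

/-- Let `g` be a finite-dimensional real Lie algebra, `H ∈ Λ³g_ℝ*` a
real `D`-closed 3-form, and `L` an `H`-generalized contact structure on `g`.  Then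
`L^{−ι₁H} := {(X, ψ − ι_X ι_1 H) : (X,ψ) ∈ L}` is an (untwisted) generalized contact
structure on `g`.  In particular, every `H`-generalized contact structure on `g` is a
2-form transform of an untwisted generalized contact structure.  (Here `1 = (0,1) ∈ g_ℝ`,
`d` is the degree-one Chevalley–Eilenberg differential of `(g_ℝ)_ℂ`, `δ2, δ3` are the
degree 2 and 3 parts of the Chevalley–Eilenberg differential of `g_ℝ`, and `ext2, ext3`
are the `ℂ`-bilinear extension operators from real forms on `g_ℝ` to complex forms on
`(g_ℝ)_ℂ`.) -/
theorem untwisting_of_generalized_contact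
    (g : Type*) [LieRing g] [LieAlgebra ℝ g] [Module.Finite ℝ g]
    (d : ((gC g) [⋀^Fin 1]→ₗ[ℂ] ℂ) → ((gC g) [⋀^Fin 2]→ₗ[ℂ] ℂ)) (hd : IsCEDiff d)
    (δ2 : ((g × ℝ) [⋀^Fin 2]→ₗ[ℝ] ℝ) → ((g × ℝ) [⋀^Fin 3]→ₗ[ℝ] ℝ)) (hδ2 : IsCEDiff δ2)
    (δ3 : ((g × ℝ) [⋀^Fin 3]→ₗ[ℝ] ℝ) → ((g × ℝ) [⋀^Fin 4]→ₗ[ℝ] ℝ)) (hδ3 : IsCEDiff δ3)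
    (ext2 : ((g × ℝ) [⋀^Fin 2]→ₗ[ℝ] ℝ) → ((gC g) [⋀^Fin 2]→ₗ[ℂ] ℂ))
    (hext2 : ∀ (α : (g × ℝ) [⋀^Fin 2]→ₗ[ℝ] ℝ) (v : Fin 2 → g × ℝ),
      ext2 α (fun i => incC g (v i)) = ((α v : ℝ) : ℂ))
    (ext3 : ((g × ℝ) [⋀^Fin 3]→ₗ[ℝ] ℝ) → ((gC g) [⋀^Fin 3]→ₗ[ℂ] ℂ))
    (hext3 : ∀ (α : (g × ℝ) [⋀^Fin 3]→ₗ[ℝ] ℝ) (v : Fin 3 → g × ℝ),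
      ext3 α (fun i => incC g (v i)) = ((α v : ℝ) : ℂ))
    (H : (g × ℝ) [⋀^Fin 3]→ₗ[ℝ] ℝ) (hH : Dform (oneStarR g) δ3 H = 0)
    (L : Submodule ℂ (gC g × ((gC g) [⋀^Fin 1]→ₗ[ℂ] ℂ)))
    (hL : IsGenContact d (ext3 H) L) :
    IsGenContact d 0
      (L.map (bTransform (ext2 (-(H.curryLeft ((0, 1) : g × ℝ)))))) ∧
    ∃ (B : (g × ℝ) [⋀^Fin 2]→ₗ[ℝ] ℝ)
      (L₀ : Submodule ℂ (gC g × ((gC g) [⋀^Fin 1]→ₗ[ℂ] ℂ))),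
      IsGenContact d 0 L₀ ∧ L = L₀.map (bTransform (ext2 B)) := by
  classical
  obtain ⟨hiso, hrank, hcj, hclosed⟩ := hL
  set β : (g × ℝ) [⋀^Fin 2]→ₗ[ℝ] ℝ := -(H.curryLeft ((0, 1) : g × ℝ)) with hβ
  set B : (gC g) [⋀^Fin 2]→ₗ[ℂ] ℂ := ext2 β with hBdef
  have hmain : IsGenContact d 0 (L.map (bTransform B)) := by
    refine ⟨?_, ?_, ?_, ?_⟩
    · rintro _ ⟨a, ha, rfl⟩ _ ⟨b, hb, rfl⟩
      have h1 : omniPair (bTransform B a) (bTransform B b)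
          = (a.2 ![b.1] + b.2 ![a.1]) + (B ![a.1, b.1] + B ![b.1, a.1]) := by
        show (a.2 ![b.1] + B ![a.1, b.1]) + (b.2 ![a.1] + B ![b.1, a.1]) = _
        ring
      rw [h1, swap2 B a.1 b.1,
        show a.2 ![b.1] + b.2 ![a.1] = 0 from hiso a ha b hb]
      ring
    · have heq : Submodule.map (bTransform B) L
          = Submodule.map ((bTEquiv (g := g) B : _ →ₗ[ℂ] _)) L := rfl
      rw [heq, LinearEquiv.finrank_map_eq]
      exact hrank
    · rintro _ ⟨a, ha, rfl⟩ hmem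
      rw [conjOmni_bTransform hext2 β a] at hmem
      obtain ⟨c, hc, hce⟩ := hmem
      have hca : c = conjOmni a := bT_injective B hce
      rw [hca] at hc
      have ha0 : a = 0 := hcj a ha hc
      rw [ha0, map_zero]
    · rintro _ ⟨a, ha, rfl⟩ _ ⟨b, hb, rfl⟩
      exact Submodule.mem_map.mpr ⟨dorfman d (ext3 H) a b, hclosed a ha b hb,
        (dorfman_bTransform hext2 hext3 hδ3 hd H hH a b).symm⟩
  refine ⟨hmain, H.curryLeft ((0, 1) : g × ℝ), L.map (bTransform B), hmain, ?_⟩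
  have hcomp : Submodule.map (bTransform (ext2 (H.curryLeft ((0, 1) : g × ℝ))))
        (Submodule.map (bTransform B) L)
      = Submodule.map ((bTransform (ext2 (H.curryLeft ((0, 1) : g × ℝ)))).comp
          (bTransform B)) L :=
    (Submodule.map_comp _ _ L).symm
  rw [hcomp]
  have hid : (bTransform (g := g) (ext2 (H.curryLeft ((0, 1) : g × ℝ)))).comp (bTransform B)
      = LinearMap.id := by
    apply LinearMap.ext
    intro a
    apply Prod.ext
    · rfl
    · apply AlternatingMap.ext
      intro w
      rw [eta1 w]
      show a.2 ![w 0] + B ![a.1, w 0]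
          + ext2 (H.curryLeft ((0, 1) : g × ℝ)) ![a.1, w 0] = a.2 ![w 0]
      have h := ext2_neg_apply hext2 (H.curryLeft ((0, 1) : g × ℝ)) a.1 (w 0)
      rw [hBdef, hβ, h]
      ring
  rw [hid, Submodule.map_id]

end
end
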